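/- For a partition λ = (λ₁, …, λ_m) with λ_k ≥ λ_{k+1} ≥ 0 and m ≥ 1, define χ_λ = m_q·q^{−m} − ν·q^{−2m}·Σ_{boxes (i,j) of λ} q^{−2(j−i)}, where ν = q − q⁻¹ and m_q = (q^m − q^{−m})/(q − q⁻¹). Then χ_λ = q⁻¹ · Σ_{k=1}^{m} q^{−2(λ_k + m − k)}. -/

import Mathlib

open Finset

/-- The λ-character of the first q-Casimir operator:
`χ_λ = m_q q^{−m} − ν q^{−2m} Σ_{boxes} q^{−2c} = q⁻¹ Σ_{k=1}^m q^{−2(λ_k+m−k)}`.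
Rows and parts are 0-indexed; the box in row `i`, column `j` has content `j − i`. -/
theorem chi_lambda_first_casimir (m : ℕ) (hm : 1 ≤ m)
    (lam : Fin m → ℕ) (hanti : Antitone lam)
    (q : ℂ) (hq0 : q ≠ 0) (hgen : ∀ n : ℕ, n ≠ 0 → q ^ n ≠ 1) :
    (q ^ (m : ℤ) - q ^ (-(m : ℤ))) / (q - q⁻¹) * q ^ (-(m : ℤ))
        - (q - q⁻¹) * q ^ (-2 * (m : ℤ))
            * ∑ i : Fin m, ∑ j ∈ Finset.range (lam i), q ^ (-2 * ((j : ℤ) - (i.val : ℤ)))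
      = q⁻¹ * ∑ k : Fin m, q ^ (-2 * ((lam k : ℤ) + (m : ℤ) - ((k.val : ℤ) + 1))) := by
  have hq2 : q ^ (2 : ℕ) ≠ 1 := hgen 2 (by norm_num)
  have hr : q ^ (-2 : ℤ) ≠ 1 := by
    rw [show (-2 : ℤ) = -(2 : ℕ) by norm_num, zpow_neg, zpow_natCast]
    simpa [inv_eq_one] using hq2
  have hr1 : q ^ (-2 : ℤ) - 1 ≠ 0 := sub_ne_zero.mpr hr
  have hq21 : q ^ (2 : ℕ) - 1 ≠ 0 := sub_ne_zero.mpr hq2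
  have hν : q - q⁻¹ ≠ 0 := by
    intro h
    apply hq2
    have h2 : q * q = 1 := by
      have : q = q⁻¹ := by linear_combination h
      field_simp at this
      linear_combination this
    calc q ^ (2:ℕ) = q * q := sq q
    _ = 1 := h2
  -- geometric sum lemma
  have geom : ∀ (c : ℤ) (n : ℕ), ∑ j ∈ Finset.range n, q ^ (-2 * ((j : ℤ) - c))
      = q ^ (2 * c) * ((q ^ (-2 : ℤ)) ^ n - 1) / (q ^ (-2 : ℤ) - 1) := by
    intro c n
    have h1 : ∀ j ∈ Finset.range n, q ^ (-2 * ((j : ℤ) - c))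
        = q ^ (2 * c) * (q ^ (-2 : ℤ)) ^ j := by
      intro j _
      rw [← zpow_natCast (q ^ (-2 : ℤ)) j, ← zpow_mul, ← zpow_add₀ hq0]
      ring_nf
    rw [Finset.sum_congr rfl h1, ← Finset.mul_sum, geom_sum_eq hr, mul_div_assoc]
  have hneg2 : q ^ (-2 : ℤ) = (q ^ (2 : ℕ))⁻¹ := by
    rw [show (-2 : ℤ) = -(2 : ℕ) by norm_num, zpow_neg, zpow_natCast]
  set Y := q ^ (-2 * (m : ℤ)) with hYdef
  -- rewrite RHS summands
  have hR : ∀ k : Fin m, q ^ (-2 * ((lam k : ℤ) + (m : ℤ) - ((k.val : ℤ) + 1)))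
      = (q ^ (-2 : ℤ)) ^ (lam k) * Y * q ^ (2 * (k.val : ℤ)) * q ^ (2 : ℕ) := by
    intro k
    rw [← zpow_natCast (q ^ (-2 : ℤ)) (lam k), ← zpow_mul, hYdef,
      ← zpow_natCast q 2, ← zpow_add₀ hq0, ← zpow_add₀ hq0, ← zpow_add₀ hq0]
    ring_nf
  have hqq : q⁻¹ * q ^ (2 : ℕ) = q := by
    field_simp
  -- per-row identity
  have key : ∀ i : Fin m,
      (q - q⁻¹) * Y * (q ^ (2 * (i.val : ℤ)) * ((q ^ (-2 : ℤ)) ^ (lam i) - 1) / (q ^ (-2 : ℤ) - 1))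
      = q⁻¹ * (Y * q ^ (2 * (i.val : ℤ)) * q ^ (2 : ℕ))
        - q⁻¹ * ((q ^ (-2 : ℤ)) ^ (lam i) * Y * q ^ (2 * (i.val : ℤ)) * q ^ (2 : ℕ)) := by
    intro i
    have hk : q - q⁻¹ = -q * (q ^ (-2 : ℤ) - 1) := by
      rw [hneg2]
      field_simp
      ring
    rw [hk]
    have step : -q * (q ^ (-2 : ℤ) - 1) * Y
          * (q ^ (2 * (i.val : ℤ)) * ((q ^ (-2 : ℤ)) ^ (lam i) - 1) / (q ^ (-2 : ℤ) - 1))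
        = (-q * Y * q ^ (2 * (i.val : ℤ)) * ((q ^ (-2 : ℤ)) ^ (lam i) - 1))
          * ((q ^ (-2 : ℤ) - 1) / (q ^ (-2 : ℤ) - 1)) := by ring
    rw [step, div_self hr1, mul_one]
    linear_combination (Y * q ^ (2 * (i.val : ℤ)) * ((q ^ (-2 : ℤ)) ^ (lam i) - 1)) * hqq
  -- first term as a geometric sum
  have hT1 : (q ^ (m : ℤ) - q ^ (-(m : ℤ))) / (q - q⁻¹) * q ^ (-(m : ℤ))
      = ∑ i : Fin m, (q⁻¹ * (Y * q ^ (2 * (i.val : ℤ)) * q ^ (2 : ℕ))) := by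
    have h1 : ∀ i : Fin m, q⁻¹ * (Y * q ^ (2 * (i.val : ℤ)) * q ^ (2 : ℕ))
        = (q⁻¹ * Y * q ^ (2 : ℕ)) * (q ^ (2 : ℕ)) ^ (i.val) := by
      intro i
      have e : q ^ (2 * (i.val : ℤ)) = (q ^ (2 : ℕ)) ^ (i.val) := by
        rw [zpow_mul]
        norm_cast
      rw [e]
      ring
    rw [Finset.sum_congr rfl (fun i _ => h1 i),
      Fin.sum_univ_eq_sum_range (fun i => (q⁻¹ * Y * q ^ (2 : ℕ)) * (q ^ (2 : ℕ)) ^ i) m,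
      ← Finset.mul_sum, geom_sum_eq hq2]
    have hab : q ^ m * q ^ (-(m : ℤ)) = 1 := by
      rw [← zpow_natCast q m, ← zpow_add₀ hq0]; norm_num
    have hYb : Y = q ^ (-(m : ℤ)) * q ^ (-(m : ℤ)) := by
      rw [hYdef, ← zpow_add₀ hq0]; ring_nf
    have hW : (q ^ (2 : ℕ)) ^ m = q ^ m * q ^ m := by
      rw [← pow_mul, two_mul, pow_add]
    have ham : q ^ (m : ℤ) = q ^ m := zpow_natCast q m
    rw [ham, hYb, hW]
    generalize q ^ (-(m : ℤ)) = b at hab ⊢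
    generalize hqt : q ^ m = t at hab ⊢
    have e1 : (t - b) * b = 1 - b * b := by linear_combination hab
    have e2 : (b * b) * (t * t - 1) = 1 - b * b := by
      linear_combination (b * t + 1) * hab
    rw [div_mul_eq_mul_div, e1]
    rw [show q⁻¹ * (b * b) * q ^ (2 : ℕ) * ((t * t - 1) / (q ^ (2 : ℕ) - 1))
        = q⁻¹ * q ^ (2 : ℕ) * ((b * b) * (t * t - 1)) / (q ^ (2 : ℕ) - 1) by ring,
      e2, hqq, div_eq_div_iff hν hq21]
    field_simp
  -- assemble
  rw [Finset.sum_congr rfl (fun k _ => geom (k.val : ℤ) (lam k)), Finset.mul_sum,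
    Finset.sum_congr rfl (fun k _ => hR k), hT1,
    Finset.sum_congr rfl (fun i _ => key i), Finset.sum_sub_distrib, Finset.mul_sum]
  ring
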